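/- Let D be a finite directed multigraph whose edges are each colored green or blue and whose vertex set is partitioned into green terminals, blue terminals and split-vertices, such that: every green (resp. blue) terminal has indegree 0 and outdegree exactly 1, its outgoing edge being green (resp. blue) and pointing to a split-vertex; every split-vertex has indegree exactly 2, with exactly one incoming green and one incoming blue edge; and every split-vertex has outdegree either 0 or 2, and in the latter case exactly one outgoing green and one outgoing blue edge, each pointing to a split-vertex. Then there exists a set of pairwise edge-disjoint S-alternating paths in D such that every terminal is the endpoint of exactly one path in the set; in particular this induces a pairing in which every green terminal is paired with a distinct blue terminal. -/

import Mathlib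

open scoped Classical
open Finset

namespace SplitGraph

/-- A finite directed multigraph with edges colored green (`true`) or blue (`false`),
whose vertices are partitioned into green terminals, blue terminals and split-vertices:
vertex type `Vt`, edge type `Et`, source, target and color maps. -/
structure ColoredDigraph (Vt Et : Type) [Fintype Vt] [Fintype Et] where
  src : Et → Vt
  tgt : Et → Vt
  col : Et → Bool
  isGreenT : Vt → Prop
  isBlueT : Vt → Prop
  isSplit : Vt → Prop

variable {Vt Et : Type} [Fintype Vt] [Fintype Et]

/-- `v` is a terminal. -/
def ColoredDigraph.isTerminal (D : ColoredDigraph Vt Et) (v : Vt) : Prop :=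
  D.isGreenT v ∨ D.isBlueT v

/-- The structural conditions of STATEMENT 5 on the colored digraph. -/
def ColoredDigraph.IsSplitGraph (D : ColoredDigraph Vt Et) : Prop :=
  -- the three classes partition the vertex set
  (∀ v : Vt, (D.isGreenT v ∧ ¬D.isBlueT v ∧ ¬D.isSplit v) ∨
    (¬D.isGreenT v ∧ D.isBlueT v ∧ ¬D.isSplit v) ∨
    (¬D.isGreenT v ∧ ¬D.isBlueT v ∧ D.isSplit v)) ∧
  -- terminals have indegree 0 and outdegree 1, the outgoing edge having the terminal's
  -- color and pointing to a split-vertex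
  (∀ v : Vt, D.isTerminal v →
    (∀ e : Et, D.tgt e ≠ v) ∧
    (Finset.univ.filter (fun e : Et => D.src e = v)).card = 1 ∧
    (∀ e : Et, D.src e = v →
      D.isSplit (D.tgt e) ∧ (D.col e = true ↔ D.isGreenT v))) ∧
  -- split-vertices have indegree 2, one incoming green and one incoming blue edge
  (∀ v : Vt, D.isSplit v →
    (Finset.univ.filter (fun e : Et => D.tgt e = v ∧ D.col e = true)).card = 1 ∧
    (Finset.univ.filter (fun e : Et => D.tgt e = v ∧ D.col e = false)).card = 1) ∧
  -- split-vertices have outdegree 0 or 2; in the latter case one outgoing green and one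
  -- outgoing blue edge, each pointing to a split-vertex
  (∀ v : Vt, D.isSplit v →
    (Finset.univ.filter (fun e : Et => D.src e = v)).card = 0 ∨
    ((Finset.univ.filter (fun e : Et => D.src e = v ∧ D.col e = true)).card = 1 ∧
     (Finset.univ.filter (fun e : Et => D.src e = v ∧ D.col e = false)).card = 1 ∧
     (∀ e : Et, D.src e = v → D.isSplit (D.tgt e))))

/-- The data of an `S`-alternating path: endpoints `v`, `w`, the split-vertices
`s_1, …, s_h` it visits, and its edge list `e_0, e_1, …, e_h`, where `e_0` joins `v` and
`s_1`, `e_j` joins `s_j` and `s_{j+1}` for `1 ≤ j ≤ h-1`, and `e_h` joins `w` and `s_h`. -/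
structure AltPath (Vt Et : Type) where
  v : Vt
  w : Vt
  ss : List Vt
  es : List Et

/-- `A` is an `S`-alternating path of `D` (with respect to a default vertex `d0` used
for out-of-range list access): `v` and `w` are terminals of different colors, the `s_i`
are split-vertices, `(v, s_1)` and `(w, s_h)` are directed edges, the edge between `s_j`
and `s_{j+1}` is directed out of the even-indexed one, and for every even `i ≥ 2` the two
directed edges `(s_i, s_{i-1})` and `(s_i, s_{i+1})` have opposite colors. -/
def IsAltPath (D : ColoredDigraph Vt Et) (d0 : Vt) (A : AltPath Vt Et) : Prop :=
  1 ≤ A.ss.length ∧ Odd A.ss.length ∧ A.es.length = A.ss.length + 1 ∧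
  (∀ s ∈ A.ss, D.isSplit s) ∧
  ((D.isGreenT A.v ∧ D.isBlueT A.w) ∨ (D.isBlueT A.v ∧ D.isGreenT A.w)) ∧
  -- e_0 goes from v to s_1, e_h goes from w to s_h
  (∀ e0, A.es.head? = some e0 → D.src e0 = A.v ∧ D.tgt e0 = A.ss.getD 0 d0) ∧
  (∀ eh, A.es.getLast? = some eh →
    D.src eh = A.w ∧ D.tgt eh = A.ss.getD (A.ss.length - 1) d0) ∧
  -- e_j joins s_j and s_{j+1}, directed out of the even-indexed split (1-indexed)
  (∀ j, 1 ≤ j → j ≤ A.ss.length - 1 →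
    ∀ ej, A.es[j]? = some ej →
      if Even j then D.src ej = A.ss.getD (j - 1) d0 ∧ D.tgt ej = A.ss.getD j d0
      else D.src ej = A.ss.getD j d0 ∧ D.tgt ej = A.ss.getD (j - 1) d0) ∧
  -- for even i ≥ 2, the two edges leaving s_i have opposite colors
  (∀ i, Even i → 2 ≤ i → i < A.ss.length →
    ∀ e1 e2, A.es[i - 1]? = some e1 → A.es[i]? = some e2 →
      D.col e1 ≠ D.col e2)

end SplitGraph

namespace SGP
open SplitGraph

/-- pick the unique element of a card-one filter -/
noncomputable def pick {α : Type} [Fintype α] {p : α → Prop} [DecidablePred p]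
    (h : (Finset.univ.filter p).card = 1) : α :=
  (Finset.card_eq_one.mp h).choose

lemma pick_prop {α : Type} [Fintype α] {p : α → Prop} [DecidablePred p]
    (h : (Finset.univ.filter p).card = 1) : p (pick h) := by
  have hs := (Finset.card_eq_one.mp h).choose_spec
  have : pick h ∈ Finset.univ.filter p := by rw [hs]; exact Finset.mem_singleton_self _
  exact (Finset.mem_filter.mp this).2

lemma pick_uniq {α : Type} [Fintype α] {p : α → Prop} [DecidablePred p]
    (h : (Finset.univ.filter p).card = 1) {b : α} (hb : p b) : b = pick h := by
  have hs := (Finset.card_eq_one.mp h).choose_spec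
  have : b ∈ Finset.univ.filter p := Finset.mem_filter.mpr ⟨Finset.mem_univ _, hb⟩
  rw [hs] at this
  exact Finset.mem_singleton.mp this

variable {Vt Et : Type} [Fintype Vt] [Fintype Et]
variable (D : ColoredDigraph Vt Et)

/-- a vertex has "in-two" structure -/
def InTwo (v : Vt) : Prop :=
  (Finset.univ.filter (fun e : Et => D.tgt e = v ∧ D.col e = true)).card = 1 ∧
  (Finset.univ.filter (fun e : Et => D.tgt e = v ∧ D.col e = false)).card = 1

def OutTwo (v : Vt) : Prop :=
  (Finset.univ.filter (fun e : Et => D.src e = v ∧ D.col e = true)).card = 1 ∧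
  (Finset.univ.filter (fun e : Et => D.src e = v ∧ D.col e = false)).card = 1

/-- in-partner: the in-edge at `tgt e` of opposite color -/
noncomputable def psi (e : Et) : Et :=
  if h : InTwo D (D.tgt e) then (if D.col e = true then pick h.2 else pick h.1) else e

/-- out-partner -/
noncomputable def phi (e : Et) : Et :=
  if h : OutTwo D (D.src e) then (if D.col e = true then pick h.2 else pick h.1) else e

variable {D}

lemma psi_spec {e : Et} (h : InTwo D (D.tgt e)) :
    D.tgt (psi D e) = D.tgt e ∧ D.col (psi D e) = !D.col e := by
  unfold psi
  rw [dif_pos h]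
  cases hc : D.col e
  · rw [if_neg (by simp)]
    exact ⟨(pick_prop h.1).1, by simp [(pick_prop h.1).2]⟩
  · rw [if_pos rfl]
    exact ⟨(pick_prop h.2).1, by simp [(pick_prop h.2).2]⟩

lemma psi_uniq {e e' : Et} (h : InTwo D (D.tgt e)) (ht : D.tgt e' = D.tgt e)
    (hc : D.col e' = !D.col e) : e' = psi D e := by
  unfold psi
  rw [dif_pos h]
  cases hce : D.col e
  · rw [if_neg (by simp)]
    exact pick_uniq h.1 ⟨ht, by rw [hce] at hc; simpa using hc⟩
  · rw [if_pos rfl]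
    exact pick_uniq h.2 ⟨ht, by rw [hce] at hc; simpa using hc⟩

lemma phi_spec {e : Et} (h : OutTwo D (D.src e)) :
    D.src (phi D e) = D.src e ∧ D.col (phi D e) = !D.col e := by
  unfold phi
  rw [dif_pos h]
  cases hc : D.col e
  · rw [if_neg (by simp)]
    exact ⟨(pick_prop h.1).1, by simp [(pick_prop h.1).2]⟩
  · rw [if_pos rfl]
    exact ⟨(pick_prop h.2).1, by simp [(pick_prop h.2).2]⟩

lemma phi_uniq {e e' : Et} (h : OutTwo D (D.src e)) (ht : D.src e' = D.src e)
    (hc : D.col e' = !D.col e) : e' = phi D e := by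
  unfold phi
  rw [dif_pos h]
  cases hce : D.col e
  · rw [if_neg (by simp)]
    exact pick_uniq h.1 ⟨ht, by rw [hce] at hc; simpa using hc⟩
  · rw [if_pos rfl]
    exact pick_uniq h.2 ⟨ht, by rw [hce] at hc; simpa using hc⟩

end SGP

namespace SGP
open SplitGraph

variable {Vt Et : Type} [Fintype Vt] [Fintype Et]
variable {D : ColoredDigraph Vt Et}

section Struct
variable (hD : D.IsSplitGraph)
include hD
set_option linter.unusedSectionVars false

lemma split_not_term {v : Vt} (hv : D.isSplit v) : ¬D.isTerminal v := by
  rcases hD.1 v with ⟨_, _, h⟩ | ⟨_, _, h⟩ | ⟨hg, hb, _⟩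
  · exact absurd hv h
  · exact absurd hv h
  · rintro (h | h) <;> [exact hg h; exact hb h]

lemma term_not_split {v : Vt} (hv : D.isTerminal v) : ¬D.isSplit v :=
  fun hs => split_not_term hD hs hv

lemma split_of_not_term {v : Vt} (hv : ¬D.isTerminal v) : D.isSplit v := by
  rcases hD.1 v with ⟨h, _, _⟩ | ⟨_, h, _⟩ | ⟨_, _, h⟩
  · exact absurd (Or.inl h) hv
  · exact absurd (Or.inr h) hv
  · exact h

lemma tgt_split (e : Et) : D.isSplit (D.tgt e) := by
  by_cases hs : D.isTerminal (D.src e)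
  · exact ((hD.2.1 _ hs).2.2 e rfl).1
  · have hsp : D.isSplit (D.src e) := split_of_not_term hD hs
    rcases hD.2.2.2 _ hsp with h0 | ⟨_, _, h⟩
    · exfalso
      have : e ∈ Finset.univ.filter (fun e' : Et => D.src e' = D.src e) :=
        Finset.mem_filter.mpr ⟨Finset.mem_univ _, rfl⟩
      rw [Finset.card_eq_zero.mp h0] at this
      exact absurd this (Finset.notMem_empty e)
    · exact h e rfl

lemma inTwo_tgt (e : Et) : InTwo D (D.tgt e) := hD.2.2.1 _ (tgt_split hD e)

lemma psi_tgt (e : Et) : D.tgt (psi D e) = D.tgt e := (psi_spec (inTwo_tgt hD e)).1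
lemma psi_col (e : Et) : D.col (psi D e) = !D.col e := (psi_spec (inTwo_tgt hD e)).2

lemma psi_psi (e : Et) : psi D (psi D e) = e := by
  have h1 := inTwo_tgt hD e
  have h2 : InTwo D (D.tgt (psi D e)) := by rw [psi_tgt hD]; exact h1
  refine (psi_uniq h2 (by rw [psi_tgt hD]) ?_).symm
  rw [psi_col hD, Bool.not_not]

lemma outTwo_of_split_src {e : Et} (hs : D.isSplit (D.src e)) : OutTwo D (D.src e) := by
  rcases hD.2.2.2 _ hs with h0 | ⟨h1, h2, _⟩
  · exfalso
    have : e ∈ Finset.univ.filter (fun e' : Et => D.src e' = D.src e) :=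
      Finset.mem_filter.mpr ⟨Finset.mem_univ _, rfl⟩
    rw [Finset.card_eq_zero.mp h0] at this
    exact absurd this (Finset.notMem_empty e)
  · exact ⟨h1, h2⟩

lemma not_outTwo_of_term {v : Vt} (hv : D.isTerminal v) : ¬OutTwo D v := by
  rintro ⟨h1, h2⟩
  have hcard := (hD.2.1 _ hv).2.1
  obtain ⟨c, hc⟩ := Finset.card_eq_one.mp hcard
  have m1 : pick h1 ∈ Finset.univ.filter (fun e : Et => D.src e = v) :=
    Finset.mem_filter.mpr ⟨Finset.mem_univ _, (pick_prop h1).1⟩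
  have m2 : pick h2 ∈ Finset.univ.filter (fun e : Et => D.src e = v) :=
    Finset.mem_filter.mpr ⟨Finset.mem_univ _, (pick_prop h2).1⟩
  rw [hc, Finset.mem_singleton] at m1 m2
  have : D.col (pick h1) = D.col (pick h2) := by rw [m1, m2]
  rw [(pick_prop h1).2, (pick_prop h2).2] at this
  exact Bool.noConfusion this

lemma phi_term {e : Et} (hv : D.isTerminal (D.src e)) : phi D e = e := by
  unfold phi
  rw [dif_neg (not_outTwo_of_term hD hv)]

lemma phi_src (e : Et) : D.src (phi D e) = D.src e := by
  by_cases h : OutTwo D (D.src e)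
  · exact (phi_spec h).1
  · unfold phi; rw [dif_neg h]

lemma phi_col_split {e : Et} (hs : D.isSplit (D.src e)) : D.col (phi D e) = !D.col e :=
  (phi_spec (outTwo_of_split_src hD hs)).2

lemma phi_tgt_split {e : Et} (hs : D.isSplit (D.src e)) : D.isSplit (D.tgt (phi D e)) :=
  tgt_split hD _

lemma phi_phi (e : Et) : phi D (phi D e) = e := by
  by_cases h : OutTwo D (D.src e)
  · have h2 : OutTwo D (D.src (phi D e)) := by rw [phi_src hD e]; exact h
    refine (phi_uniq h2 (by rw [phi_src hD]) ?_).symm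
    rw [(phi_spec h).2, Bool.not_not]
  · unfold phi
    rw [dif_neg h, dif_neg h]

/-- the unique out-edge of a terminal -/
noncomputable def e0 (t : Vt) (ht : D.isTerminal t) : Et := pick (hD.2.1 t ht).2.1

lemma e0_src (t : Vt) (ht : D.isTerminal t) : D.src (e0 hD t ht) = t := by
  unfold e0; exact pick_prop ((hD.2.1 t ht).2.1)

lemma e0_uniq {t : Vt} (ht : D.isTerminal t) {e : Et} (he : D.src e = t) :
    e = e0 hD t ht := by unfold e0; exact pick_uniq ((hD.2.1 t ht).2.1) he

lemma e0_col (t : Vt) (ht : D.isTerminal t) : D.col (e0 hD t ht) = true ↔ D.isGreenT t :=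
  ((hD.2.1 t ht).2.2 _ (e0_src hD t ht)).2

/-- the alternating walk starting at terminal `t` -/
noncomputable def F (t : Vt) (ht : D.isTerminal t) : ℕ → Et
  | 0 => e0 hD t ht
  | n+1 => if Even n then psi D (F t ht n) else phi D (F t ht n)

end Struct
end SGP

namespace SGP
open SplitGraph

variable {Vt Et : Type} [Fintype Vt] [Fintype Et]
variable {D : ColoredDigraph Vt Et}

section Walk
variable (hD : D.IsSplitGraph)
include hD
set_option linter.unusedSectionVars false

lemma psi_inj : Function.Injective (psi D) :=
  Function.LeftInverse.injective (psi_psi hD)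

lemma phi_inj : Function.Injective (phi D) :=
  Function.LeftInverse.injective (phi_phi hD)

variable {t : Vt} (ht : D.isTerminal t)

lemma F_zero : F hD t ht 0 = e0 hD t ht := rfl

lemma F_succ (n : ℕ) :
    F hD t ht (n+1) = if Even n then psi D (F hD t ht n) else phi D (F hD t ht n) := rfl

lemma F_succ_even {n : ℕ} (hn : Even n) : F hD t ht (n+1) = psi D (F hD t ht n) := by
  rw [F_succ, if_pos hn]

lemma F_succ_odd {n : ℕ} (hn : ¬Even n) : F hD t ht (n+1) = phi D (F hD t ht n) := by
  rw [F_succ, if_neg hn]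

lemma F_odd_iterate (k : ℕ) :
    F hD t ht (2*k+1) = (psi D ∘ phi D)^[k] (F hD t ht 1) := by
  induction k with
  | zero => simp
  | succ n ih =>
    have h1 : 2*(n+1)+1 = (2*n+2)+1 := by ring
    rw [h1, F_succ_even hD ht (by exact ⟨n+1, by ring⟩),
      show 2*n+2 = (2*n+1)+1 from by ring,
      F_succ_odd hD ht (by simp [Nat.even_add_one, parity_simps]),
      ih, Function.iterate_succ_apply']
    rfl

lemma exists_stop : ∃ k, Odd k ∧ D.isTerminal (D.src (F hD t ht k)) := by
  by_contra hcon
  push_neg at hcon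
  set f : Et → Et := psi D ∘ phi D with hf
  have hinj : Function.Injective f := (psi_inj hD).comp (phi_inj hD)
  obtain ⟨a, b, hab, heq⟩ := Finite.exists_ne_map_eq_of_infinite
    (fun k : ℕ => f^[k] (F hD t ht 1))
  wlog hlt : a < b generalizing a b
  · exact this b a hab.symm heq.symm (by omega)
  have hx : F hD t ht 1 = f^[b-a] (F hD t ht 1) := by
    have := Function.Injective.iterate hinj a
    apply this
    simpa [← Function.iterate_add_apply, show a + (b-a) = b from by omega] using heq
  have hba : b - a = (b-a-1) + 1 := by omega
  rw [hba, Function.iterate_succ_apply'] at hx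
  set y := f^[b-a-1] (F hD t ht 1) with hy
  have hy2 : y = F hD t ht (2*(b-a-1)+1) := (F_odd_iterate hD ht _).symm
  have hphiy : phi D y = F hD t ht 0 := by
    have h1 : psi D (phi D y) = F hD t ht 1 := hx.symm
    have h2 : phi D y = psi D (F hD t ht 1) := by rw [← h1, psi_psi hD]
    rw [h2, F_succ_even hD ht (Even.zero), psi_psi hD]
  have hsrc : D.src y = t := by
    rw [← phi_src hD y, hphiy, F_zero, e0_src]
  exact hcon (2*(b-a-1)+1) ⟨b-a-1, by ring⟩ (by rw [← hy2, hsrc]; exact ht)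

/-- the length parameter of the walk from `t` -/
noncomputable def H : ℕ := Nat.find (exists_stop hD ht)

lemma H_odd : Odd (H hD ht) := (Nat.find_spec (exists_stop hD ht)).1

lemma H_pos : 1 ≤ H hD ht := by
  have := H_odd hD ht
  rcases this with ⟨k, hk⟩; omega

lemma H_src_term : D.isTerminal (D.src (F hD t ht (H hD ht))) :=
  (Nat.find_spec (exists_stop hD ht)).2

lemma src_F_split {k : ℕ} (h0 : 0 < k) (hk : k < H hD ht) :
    D.isSplit (D.src (F hD t ht k)) := by
  rcases Nat.even_or_odd k with he | ho
  · -- k even, so k ≥ 2, F k = phi (F (k-1)) with k-1 odd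
    have hk1 : ¬ Even (k-1) := by
      have h2 := Nat.even_iff.mp he
      rw [Nat.even_iff]
      omega
    have hstep : F hD t ht ((k-1)+1) = phi D (F hD t ht (k-1)) := F_succ_odd hD ht hk1
    rw [show k = (k-1)+1 from by omega, hstep, phi_src hD]
    have hodd : Odd (k-1) := Nat.odd_iff.mpr (by rw [Nat.even_iff] at hk1; omega)
    have hterm := Nat.find_min (exists_stop hD ht) (by omega : k - 1 < H hD ht)
    apply split_of_not_term hD
    intro hterm'
    exact hterm ⟨hodd, hterm'⟩
  · have hterm := Nat.find_min (exists_stop hD ht) hk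
    apply split_of_not_term hD
    intro hterm'
    exact hterm ⟨ho, hterm'⟩

lemma src_F_zero : D.src (F hD t ht 0) = t := e0_src hD t ht

lemma term_src_iff {k : ℕ} (hk : k ≤ H hD ht) :
    D.isTerminal (D.src (F hD t ht k)) ↔ k = 0 ∨ k = H hD ht := by
  constructor
  · intro h
    by_contra hcon
    push_neg at hcon
    exact split_not_term hD (src_F_split hD ht (by omega) (by omega)) h
  · rintro (rfl | rfl)
    · rw [src_F_zero hD ht]; exact ht
    · exact H_src_term hD ht

lemma col_F {k : ℕ} (hk : k ≤ H hD ht) :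
    D.col (F hD t ht k) = if Even k then D.col (F hD t ht 0) else !D.col (F hD t ht 0) := by
  induction k with
  | zero => simp
  | succ n ih =>
    have hn : n ≤ H hD ht := by omega
    rcases Nat.even_or_odd n with he | ho
    · rw [F_succ_even hD ht he, psi_col hD, ih hn, if_pos he,
        if_neg (by simp [Nat.even_add_one, he])]
    · have hne : ¬ Even n := Nat.not_even_iff_odd.mpr ho
      have hsplit : D.isSplit (D.src (F hD t ht n)) := by
        apply src_F_split hD ht (by rcases ho with ⟨m, hm⟩; omega)
        have hodd := H_odd hD ht
        rcases ho with ⟨m, hm⟩; rcases hodd with ⟨m', hm'⟩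
        omega
      rw [F_succ_odd hD ht hne, phi_col_split hD hsplit, ih hn, if_neg hne,
        if_pos (by simp [Nat.even_add_one, hne]), Bool.not_not]

end Walk
end SGP

namespace SGP
open SplitGraph

variable {Vt Et : Type} [Fintype Vt] [Fintype Et]
variable {D : ColoredDigraph Vt Et}

section Rev
variable (hD : D.IsSplitGraph)
include hD
set_option linter.unusedSectionVars false
variable {t : Vt} (ht : D.isTerminal t)

/-- the other endpoint of the walk from `t` -/
noncomputable def wT : Vt := D.src (F hD t ht (H hD ht))

lemma wT_term : D.isTerminal (wT hD ht) := H_src_term hD ht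

lemma F_rev : ∀ k, k ≤ H hD ht →
    F hD (wT hD ht) (wT_term hD ht) k = F hD t ht (H hD ht - k) := by
  intro k
  induction k with
  | zero =>
    intro _
    simp only [Nat.sub_zero]
    exact (e0_uniq hD (wT_term hD ht) rfl).symm
  | succ k ih =>
    intro hk1
    have ih' := ih (by omega)
    have hHodd := Nat.odd_iff.mp (H_odd hD ht)
    rcases Nat.even_or_odd k with he | ho
    · have hpar : Even (H hD ht - (k+1)) := by
        rw [Nat.even_iff] at he ⊢; omega
      have h2 : F hD t ht ((H hD ht - (k+1))+1) = psi D (F hD t ht (H hD ht - (k+1))) :=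
        F_succ_even hD ht hpar
      have h3 : (H hD ht - (k+1))+1 = H hD ht - k := by omega
      rw [F_succ_even hD (wT_term hD ht) he, ih', ← h3, h2, psi_psi hD]
    · have hko := Nat.odd_iff.mp ho
      have hpar : ¬ Even (H hD ht - (k+1)) := by
        rw [Nat.even_iff]; omega
      have h2 : F hD t ht ((H hD ht - (k+1))+1) = phi D (F hD t ht (H hD ht - (k+1))) :=
        F_succ_odd hD ht hpar
      have h3 : (H hD ht - (k+1))+1 = H hD ht - k := by omega
      rw [F_succ_odd hD (wT_term hD ht) (by rw [Nat.even_iff]; omega), ih', ← h3, h2,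
        phi_phi hD]

lemma H_rev : H hD (wT_term hD ht) = H hD ht := by
  have le1 : H hD (wT_term hD ht) ≤ H hD ht := by
    apply Nat.find_le
    refine ⟨H_odd hD ht, ?_⟩
    rw [F_rev hD ht (H hD ht) le_rfl, Nat.sub_self, src_F_zero hD ht]
    exact ht
  have h0 := H_src_term hD (wT_term hD ht)
  rw [F_rev hD ht _ le1] at h0
  have h1 := (term_src_iff hD ht (by omega)).mp h0
  have hHodd := Nat.odd_iff.mp (H_odd hD ht)
  have hodd2 := Nat.odd_iff.mp (H_odd hD (wT_term hD ht))
  omega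

lemma wT_wT : wT hD (wT_term hD ht) = t := by
  show D.src (F hD (wT hD ht) (wT_term hD ht) (H hD (wT_term hD ht))) = t
  rw [H_rev hD ht, F_rev hD ht _ le_rfl, Nat.sub_self, src_F_zero hD ht]

lemma rec_det {t' : Vt} (ht' : D.isTerminal t') :
    ∀ i j, i % 2 = j % 2 → i ≤ j → F hD t ht i = F hD t' ht' j →
      F hD t ht 0 = F hD t' ht' (j - i) := by
  intro i
  induction i with
  | zero => intro j _ _ h; simpa using h
  | succ i ih =>
    intro j hpar hle heq
    obtain ⟨j', rfl⟩ : ∃ j', j = j'+1 := ⟨j-1, by omega⟩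
    have hpar' : i % 2 = j' % 2 := by omega
    have heq' : F hD t ht i = F hD t' ht' j' := by
      rcases Nat.even_or_odd i with he | ho
      · have he' : Even j' := by rw [Nat.even_iff] at he ⊢; omega
        rw [F_succ_even hD ht he, F_succ_even hD ht' he'] at heq
        exact psi_inj hD heq
      · have hio := Nat.odd_iff.mp ho
        have hne : ¬ Even i := by rw [Nat.even_iff]; omega
        have hne' : ¬ Even j' := by rw [Nat.even_iff]; omega
        rw [F_succ_odd hD ht hne, F_succ_odd hD ht' hne'] at heq
        exact phi_inj hD heq
    have := ih j' hpar' (by omega) heq'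
    rw [show j'+1-(i+1) = j'-i from by omega]
    exact this

lemma eq_of_shared_par {t' : Vt} (ht' : D.isTerminal t') {i j : ℕ}
    (hi : i ≤ H hD ht) (hj : j ≤ H hD ht') (hpar : i % 2 = j % 2)
    (heq : F hD t ht i = F hD t' ht' j) : t = t' := by
  rcases le_or_gt i j with hle | hlt
  · have h0 := rec_det hD ht ht' i j hpar hle heq
    have hterm : D.isTerminal (D.src (F hD t' ht' (j-i))) := by
      rw [← h0, src_F_zero hD ht]; exact ht
    have hcase := (term_src_iff hD ht' (by omega)).mp hterm
    have hHodd := Nat.odd_iff.mp (H_odd hD ht')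
    have hji : j - i = 0 := by omega
    rw [hji] at h0
    calc t = D.src (F hD t ht 0) := (src_F_zero hD ht).symm
    _ = D.src (F hD t' ht' 0) := by rw [h0]
    _ = t' := src_F_zero hD ht'
  · have h0 := rec_det hD ht' ht j i hpar.symm (by omega) heq.symm
    have hterm : D.isTerminal (D.src (F hD t ht (i-j))) := by
      rw [← h0, src_F_zero hD ht']; exact ht'
    have hcase := (term_src_iff hD ht (by omega)).mp hterm
    have hHodd := Nat.odd_iff.mp (H_odd hD ht)
    exfalso; omega

lemma shared {t' : Vt} (ht' : D.isTerminal t') {i j : ℕ}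
    (hi : i ≤ H hD ht) (hj : j ≤ H hD ht')
    (heq : F hD t ht i = F hD t' ht' j) : t = t' ∨ t = wT hD ht' := by
  by_cases hpar : i % 2 = j % 2
  · exact Or.inl (eq_of_shared_par hD ht ht' hi hj hpar heq)
  · right
    have hHodd := Nat.odd_iff.mp (H_odd hD ht')
    have hj' : H hD ht' - j ≤ H hD (wT_term hD ht') := by
      rw [H_rev hD ht']; omega
    have heq2 : F hD t ht i = F hD (wT hD ht') (wT_term hD ht') (H hD ht' - j) := by
      rw [F_rev hD ht' _ (by omega : H hD ht' - j ≤ H hD ht'),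
        show H hD ht' - (H hD ht' - j) = j from by omega]
      exact heq
    have hpar2 : i % 2 = (H hD ht' - j) % 2 := by omega
    exact eq_of_shared_par hD ht (wT_term hD ht') hi hj' hpar2 heq2

lemma e0_eq_F_H : F hD t ht (H hD ht) = e0 hD (wT hD ht) (wT_term hD ht) :=
  e0_uniq hD (wT_term hD ht) rfl

lemma green_wT : D.isGreenT (wT hD ht) ↔ ¬ D.isGreenT t := by
  have hcol := col_F hD ht (le_refl (H hD ht))
  rw [if_neg (by have := Nat.odd_iff.mp (H_odd hD ht); rw [Nat.even_iff]; omega)] at hcol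
  have h1 := e0_col hD (wT hD ht) (wT_term hD ht)
  rw [← e0_eq_F_H hD ht] at h1
  have h2 := e0_col hD t ht
  rw [← F_zero hD ht] at h2
  rw [hcol] at h1
  constructor
  · intro hg hgt
    have ha := h1.mpr hg
    have hb := h2.mpr hgt
    rw [hb] at ha
    exact Bool.noConfusion ha
  · intro hng
    apply h1.mp
    cases hc0 : D.col (F hD t ht 0)
    · rfl
    · exact absurd (h2.mp hc0) hng

lemma blue_of_term_not_green {v : Vt} (hv : D.isTerminal v) (hg : ¬D.isGreenT v) :
    D.isBlueT v := by
  rcases hv with h | h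
  · exact absurd h hg
  · exact h

lemma not_blue_of_green {v : Vt} (hg : D.isGreenT v) : ¬D.isBlueT v := by
  rcases hD.1 v with ⟨_, h, _⟩ | ⟨h, _, _⟩ | ⟨h, _, _⟩
  · exact h
  · exact absurd hg h
  · exact absurd hg h

end Rev
end SGP

namespace SGP
open SplitGraph

variable {Vt Et : Type} [Fintype Vt] [Fintype Et]
variable {D : ColoredDigraph Vt Et}

section Path
variable (hD : D.IsSplitGraph)
include hD
set_option linter.unusedSectionVars false
variable {t : Vt} (ht : D.isTerminal t)

/-- the S-alternating path associated with the walk from terminal `t` -/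
noncomputable def mkPath : AltPath Vt Et :=
  { v := t, w := wT hD ht,
    ss := (List.range (H hD ht)).map
      (fun k => if Even k then D.tgt (F hD t ht k) else D.src (F hD t ht k)),
    es := (List.range (H hD ht + 1)).map (F hD t ht) }

lemma mkPath_ss_length : (mkPath hD ht).ss.length = H hD ht := by
  simp [mkPath]

lemma mkPath_es_length : (mkPath hD ht).es.length = H hD ht + 1 := by
  simp [mkPath]

lemma mkPath_es_get? {j : ℕ} (hj : j < H hD ht + 1) :
    (mkPath hD ht).es[j]? = some (F hD t ht j) := by
  simp [mkPath, List.getElem?_map, List.getElem?_range hj]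

lemma mkPath_ss_getD (d0 : Vt) {k : ℕ} (hk : k < H hD ht) :
    (mkPath hD ht).ss.getD k d0 =
      if Even k then D.tgt (F hD t ht k) else D.src (F hD t ht k) := by
  simp [mkPath, List.getD_eq_getElem?_getD, List.getElem?_map, List.getElem?_range hk]

lemma mem_mkPath_es {e : Et} :
    e ∈ (mkPath hD ht).es ↔ ∃ k ≤ H hD ht, F hD t ht k = e := by
  simp only [mkPath, List.mem_map, List.mem_range]
  constructor
  · rintro ⟨k, hk, rfl⟩; exact ⟨k, by omega, rfl⟩
  · rintro ⟨k, hk, rfl⟩; exact ⟨k, by omega, rfl⟩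

lemma tgt_F_succ_even {n : ℕ} (hn : Even n) :
    D.tgt (F hD t ht (n+1)) = D.tgt (F hD t ht n) := by
  rw [F_succ_even hD ht hn, psi_tgt hD]

lemma src_F_succ_odd {n : ℕ} (hn : ¬Even n) :
    D.src (F hD t ht (n+1)) = D.src (F hD t ht n) := by
  rw [F_succ_odd hD ht hn, phi_src hD]

lemma isAltPath_mkPath (d0 : Vt) : IsAltPath D d0 (mkPath hD ht) := by
  have hH1 := H_pos hD ht
  have hHodd := Nat.odd_iff.mp (H_odd hD ht)
  refine ⟨?_, ?_, ?_, ?_, ?_, ?_, ?_, ?_, ?_⟩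
  · rw [mkPath_ss_length hD ht]; exact hH1
  · rw [mkPath_ss_length hD ht]; exact H_odd hD ht
  · rw [mkPath_ss_length hD ht, mkPath_es_length hD ht]
  · intro s hs
    simp only [mkPath, List.mem_map, List.mem_range] at hs
    obtain ⟨k, hk, rfl⟩ := hs
    rcases Nat.even_or_odd k with he | ho
    · rw [if_pos he]; exact tgt_split hD _
    · rw [if_neg (by rw [Nat.even_iff]; have := Nat.odd_iff.mp ho; omega)]
      exact src_F_split hD ht (by have := Nat.odd_iff.mp ho; omega) hk
  · show (D.isGreenT t ∧ _) ∨ (D.isBlueT t ∧ _)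
    by_cases hg : D.isGreenT t
    · exact Or.inl ⟨hg, blue_of_term_not_green hD (wT_term hD ht)
        (fun h => (green_wT hD ht).mp h hg)⟩
    · exact Or.inr ⟨blue_of_term_not_green hD ht hg, (green_wT hD ht).mpr hg⟩
  · intro e0' he0'
    have h0 : (mkPath hD ht).es[0]? = some (F hD t ht 0) :=
      mkPath_es_get? hD ht (by omega)
    rw [List.head?_eq_getElem?, h0] at he0'
    obtain rfl := Option.some_injective _ he0'.symm
    refine ⟨src_F_zero hD ht, ?_⟩
    rw [mkPath_ss_getD hD ht d0 (by omega : 0 < H hD ht), if_pos Even.zero]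
  · intro eh heh
    rw [List.getLast?_eq_getElem?, mkPath_es_length hD ht, Nat.add_sub_cancel,
      mkPath_es_get? hD ht (by omega)] at heh
    obtain rfl := Option.some_injective _ heh.symm
    constructor
    · rfl
    · rw [mkPath_ss_length hD ht,
        mkPath_ss_getD hD ht d0 (by omega : H hD ht - 1 < H hD ht),
        if_pos (by rw [Nat.even_iff]; omega)]
      have h5 : H hD ht = (H hD ht - 1) + 1 := by omega
      conv_lhs => rw [h5]
      exact tgt_F_succ_even hD ht (by rw [Nat.even_iff]; omega)
  · intro j hj1 hj2 ej hej
    rw [mkPath_ss_length hD ht] at hj2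
    rw [mkPath_es_get? hD ht (by omega)] at hej
    obtain rfl := Option.some_injective _ hej.symm
    rcases Nat.even_or_odd j with he | ho
    · rw [if_pos he]
      have hje := Nat.even_iff.mp he
      constructor
      · rw [mkPath_ss_getD hD ht d0 (by omega : j - 1 < H hD ht),
          if_neg (by rw [Nat.even_iff]; omega)]
        have h5 : j = (j-1) + 1 := by omega
        conv_lhs => rw [h5]
        exact src_F_succ_odd hD ht (by rw [Nat.even_iff]; omega)
      · rw [mkPath_ss_getD hD ht d0 (by omega : j < H hD ht), if_pos he]
    · have hjo := Nat.odd_iff.mp ho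
      rw [if_neg (by rw [Nat.even_iff]; omega)]
      constructor
      · rw [mkPath_ss_getD hD ht d0 (by omega : j < H hD ht),
          if_neg (by rw [Nat.even_iff]; omega)]
      · rw [mkPath_ss_getD hD ht d0 (by omega : j - 1 < H hD ht),
          if_pos (by rw [Nat.even_iff]; omega)]
        have h5 : j = (j-1) + 1 := by omega
        conv_lhs => rw [h5]
        exact tgt_F_succ_even hD ht (by rw [Nat.even_iff]; omega)
  · intro i hie hi2 hiH e1 e2 he1 he2
    rw [mkPath_ss_length hD ht] at hiH
    have hieq := Nat.even_iff.mp hie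
    rw [mkPath_es_get? hD ht (by omega)] at he1 he2
    obtain rfl := Option.some_injective _ he1.symm
    obtain rfl := Option.some_injective _ he2.symm
    have hsplit : D.isSplit (D.src (F hD t ht (i-1))) :=
      src_F_split hD ht (by omega) (by omega)
    have : F hD t ht i = phi D (F hD t ht (i-1)) := by
      rw [show i = (i-1)+1 from by omega]
      exact F_succ_odd hD ht (by rw [Nat.even_iff]; omega)
    rw [this, phi_col_split hD hsplit]
    cases D.col (F hD t ht (i-1)) <;> simp

end Path
end SGP

namespace SGP
open SplitGraph

variable {Vt Et : Type} [Fintype Vt] [Fintype Et]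
variable {D : ColoredDigraph Vt Et}

section WSec
variable (hD : D.IsSplitGraph)
include hD
set_option linter.unusedSectionVars false

/-- the other-endpoint map, as a total function -/
noncomputable def W (v : Vt) : Vt := if h : D.isTerminal v then wT hD h else v

lemma W_eq {v : Vt} (hv : D.isTerminal v) : W hD v = wT hD hv := dif_pos hv

lemma W_term {v : Vt} (hv : D.isTerminal v) : D.isTerminal (W hD v) := by
  rw [W_eq hD hv]; exact wT_term hD hv

lemma W_W {v : Vt} (hv : D.isTerminal v) : W hD (W hD v) = v := by
  rw [W_eq hD hv, W_eq hD (wT_term hD hv)]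
  exact wT_wT hD hv

lemma green_W {v : Vt} (hv : D.isTerminal v) : D.isGreenT (W hD v) ↔ ¬D.isGreenT v := by
  rw [W_eq hD hv]; exact green_wT hD hv

lemma blue_W {v : Vt} (hv : D.isTerminal v) (hg : D.isGreenT v) : D.isBlueT (W hD v) :=
  blue_of_term_not_green hD (W_term hD hv) (fun h => (green_W hD hv).mp h hg)

lemma mkPath_v {t : Vt} (ht : D.isTerminal t) : (mkPath hD ht).v = t := rfl

lemma mkPath_w {t : Vt} (ht : D.isTerminal t) : (mkPath hD ht).w = W hD t :=
  (W_eq hD ht).symm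

lemma shared_W {t t' : Vt} (ht : D.isTerminal t) (ht' : D.isTerminal t') {i j : ℕ}
    (hi : i ≤ H hD ht) (hj : j ≤ H hD ht')
    (heq : F hD t ht i = F hD t' ht' j) : t = t' ∨ t = W hD t' := by
  rcases shared hD ht ht' hi hj heq with h | h
  · exact Or.inl h
  · right; rw [W_eq hD ht']; exact h

end WSec
end SGP

open SplitGraph in
open SGP in
/-- in any colored directed multigraph with the split-graph structure, there
is a set of pairwise edge-disjoint `S`-alternating paths such that every terminal is the
endpoint of exactly one path of the set; in particular this pairs every green terminal
with a distinct blue terminal. -/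
theorem stmt_5 {Vt Et : Type} [Fintype Vt] [Fintype Et]
    (D : ColoredDigraph Vt Et) (hD : D.IsSplitGraph) (d0 : Vt) :
    ∃ (n : ℕ) (A : Fin n → AltPath Vt Et),
      (∀ i, IsAltPath D d0 (A i)) ∧
      (∀ i j, i ≠ j → ∀ e ∈ (A i).es, e ∉ (A j).es) ∧
      (∀ t : Vt, D.isTerminal t →
        (Finset.univ.filter (fun i : Fin n => (A i).v = t ∨ (A i).w = t)).card = 1) ∧
      ∃ f : {v : Vt // D.isGreenT v} → {v : Vt // D.isBlueT v},
        Function.Injective f ∧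
        ∀ g : {v : Vt // D.isGreenT v}, ∃ i,
          ((A i).v = g.1 ∧ (A i).w = (f g).1) ∨ ((A i).v = (f g).1 ∧ (A i).w = g.1) := by
    classical
  set n := Fintype.card {v : Vt // D.isGreenT v} with hn
  set eqv : {v : Vt // D.isGreenT v} ≃ Fin n := Fintype.equivFin _ with heqv
  have gterm : ∀ g : {v : Vt // D.isGreenT v}, D.isTerminal g.1 := fun g => Or.inl g.2
  refine ⟨n, fun i => mkPath hD (gterm (eqv.symm i)), ?_, ?_, ?_, ?_⟩
  · intro i
    exact isAltPath_mkPath hD (gterm (eqv.symm i)) d0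
  · intro i j hij e hei hej
    obtain ⟨a, ha, rfl⟩ := (mem_mkPath_es hD (gterm (eqv.symm i))).mp hei
    obtain ⟨b, hb, heq⟩ := (mem_mkPath_es hD (gterm (eqv.symm j))).mp hej
    rcases shared_W hD (gterm (eqv.symm j)) (gterm (eqv.symm i)) hb ha heq with h | h
    · apply hij
      have : eqv.symm j = eqv.symm i := Subtype.ext h
      have := congrArg eqv this
      simpa using this.symm
    · have hgj : D.isGreenT (eqv.symm j).1 := (eqv.symm j).2
      rw [h] at hgj
      exact (green_W hD (gterm (eqv.symm i))).mp hgj (eqv.symm i).2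
  · intro t htm
    rw [Finset.card_eq_one]
    by_cases hg : D.isGreenT t
    · refine ⟨eqv ⟨t, hg⟩, ?_⟩
      ext i
      simp only [Finset.mem_filter, Finset.mem_univ, true_and, Finset.mem_singleton]
      constructor
      · rintro (h | h)
        · rw [mkPath_v hD (gterm (eqv.symm i))] at h
          have : eqv.symm i = ⟨t, hg⟩ := Subtype.ext h
          have := congrArg eqv this
          simpa using this
        · exfalso
          rw [mkPath_w hD (gterm (eqv.symm i))] at h
          have hgw : D.isGreenT (W hD (eqv.symm i).1) := by rw [h]; exact hg
          exact (green_W hD (gterm (eqv.symm i))).mp hgw (eqv.symm i).2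
      · rintro rfl
        left
        rw [mkPath_v hD (gterm _)]
        simp
    · have hwt : D.isGreenT (W hD t) := (green_W hD htm).mpr hg
      refine ⟨eqv ⟨W hD t, hwt⟩, ?_⟩
      ext i
      simp only [Finset.mem_filter, Finset.mem_univ, true_and, Finset.mem_singleton]
      constructor
      · rintro (h | h)
        · exfalso
          rw [mkPath_v hD (gterm (eqv.symm i))] at h
          have := (eqv.symm i).2
          rw [h] at this
          exact hg this
        · rw [mkPath_w hD (gterm (eqv.symm i))] at h
          have h2 : (eqv.symm i).1 = W hD t := by
            rw [← W_W hD (gterm (eqv.symm i)), h]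
          have : eqv.symm i = ⟨W hD t, hwt⟩ := Subtype.ext h2
          have := congrArg eqv this
          simpa using this
      · rintro rfl
        right
        rw [mkPath_w hD (gterm _)]
        have : (eqv.symm (eqv ⟨W hD t, hwt⟩)).1 = W hD t := by simp
        rw [this]
        exact W_W hD htm
  · refine ⟨fun g => ⟨W hD g.1, blue_W hD (gterm g) g.2⟩, ?_, ?_⟩
    · intro g g' hff
      have h1 : W hD g.1 = W hD g'.1 := congrArg Subtype.val hff
      apply Subtype.ext
      rw [← W_W hD (gterm g), h1, W_W hD (gterm g')]
    · intro g
      refine ⟨eqv g, Or.inl ⟨?_, ?_⟩⟩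
      · rw [mkPath_v hD (gterm _)]; simp
      · rw [mkPath_w hD (gterm _)]
        have : (eqv.symm (eqv g)).1 = g.1 := by simp
        rw [this]
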